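/- Every pair (AT, ET) with AT a nonempty set of timelines of a model M and ET ⊆ AT arises from a context: there exists a context C = (ℒ, ≻, 𝕌) for M such that Acc(C) = AT and Exp(C) = ET. -/
import Mathlib


universe u

/-- Maximal elements of `S` with respect to the priority relation `r`:
no element of `S` is strictly above them. -/
def maxOf {α : Type u} (r : α → α → Prop) (S : Set α) : Set α :=
  {x | x ∈ S ∧ ∀ y ∈ S, ¬ r y x}

/-- The rules remaining after `k` rounds of removing maximal elements. -/
def remSet {α : Type u} (r : α → α → Prop) (L : Set α) : ℕ → Set α
  | 0 => L
  | k + 1 => remSet r L k \ maxOf r (remSet r L k)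

/-- The `k`-th level of the hierarchy of rules: the maximal elements of what remains. -/
def levelSet {α : Type u} (r : α → α → Prop) (L : Set α) (k : ℕ) : Set α :=
  maxOf r (remSet r L k)

/-- A model for SWONBT: a serial discrete rooted tree with a valuation. -/
structure TreeModel (AP : Type) : Type 1 where
  W : Type
  R : W → W → Prop
  root : W
  serial : ∀ w, ∃ v, R w v
  rooted : ∀ w, ∃! l : List W,
    l.head? = some root ∧ l.getLast? = some w ∧ List.Chain' R l
  V : AP → Set W

/-- A timeline: an infinite `R`-increasing sequence starting at the root. -/
def Timeline {AP : Type} (M : TreeModel AP) : Type :=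
  {π : ℕ → M.W // π 0 = M.root ∧ ∀ i, M.R (π i) (π (i + 1))}

/-- A context for a model: a finite set of ontic rules (sets of timelines),
an irreflexive transitive priority order on them, and a set of undefeatable
rules among the maximal ones. -/
structure Context {AP : Type} (M : TreeModel AP) where
  rules : Set (Set (Timeline M))
  rules_fin : rules.Finite
  prio : Set (Timeline M) → Set (Timeline M) → Prop
  prio_irrefl : ∀ a ∈ rules, ¬ prio a a
  prio_trans : ∀ a ∈ rules, ∀ b ∈ rules, ∀ c ∈ rules, prio a b → prio b c → prio a c
  und : Set (Set (Timeline M))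
  und_sub : und ⊆ maxOf prio rules

/-- Timelines enabled by a set of rules: their intersection
(everything, if the set of rules is empty). -/
def En {AP : Type} {M : TreeModel AP} (S : Set (Set (Timeline M))) : Set (Timeline M) :=
  ⋂₀ S

/-- Accepted timelines: those enabled by the undefeatable rules. -/
def AccSet {AP : Type} {M : TreeModel AP} (C : Context M) : Set (Timeline M) :=
  En C.und

/-- The intersection `En(ℒ₀) ∩ … ∩ En(ℒ_k)` of the first `k+1` levels of the hierarchy. -/
def ISeg {AP : Type} {M : TreeModel AP} (C : Context M) (k : ℕ) : Set (Timeline M) :=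
  ⋂ j ∈ Finset.range (k + 1), En (levelSet C.prio C.rules j)

open Classical in
/-- Expected timelines: empty if `En(ℒ₀) = ∅`; otherwise the intersection of
`En(ℒ_j)` along the longest initial segment of the hierarchy with nonempty
intersection. -/
noncomputable def ExpSet {AP : Type} {M : TreeModel AP} (C : Context M) : Set (Timeline M) :=
  if En (levelSet C.prio C.rules 0) = ∅ then ∅
  else ⋂ j ∈ {j : ℕ | ISeg C j ≠ ∅}, En (levelSet C.prio C.rules j)

/-- Formulas of the logic SWONBT. -/
inductive Formula (AP : Type) : Type where
  | atom : AP → Formula AP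
  | bot : Formula AP
  | neg : Formula AP → Formula AP
  | and : Formula AP → Formula AP → Formula AP
  | next : Formula AP → Formula AP
  | yest : Formula AP → Formula AP
  | strg : Formula AP → Formula AP
  | weak : Formula AP → Formula AP

/-- Disjunction, defined classically. -/
def Formula.or {AP : Type} (φ ψ : Formula AP) : Formula AP :=
  .neg (.and (.neg φ) (.neg ψ))

/-- `⟨S⟩φ := ¬[S]¬φ`. -/
def Formula.diaS {AP : Type} (φ : Formula AP) : Formula AP :=
  .neg (.strg (.neg φ))

/-- `⟨W⟩φ := ¬[W]¬φ`. -/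
def Formula.diaW {AP : Type} (φ : Formula AP) : Formula AP :=
  .neg (.weak (.neg φ))

/-- Truth of formulas relative to a set `AT` of accepted timelines and a set
`ET` of expected timelines (the semantics of AE pointed models). -/
def Sat {AP : Type} (M : TreeModel AP) (AT ET : Set (Timeline M)) :
    Formula AP → Timeline M → ℕ → Prop
  | .atom p, π, i => π.1 i ∈ M.V p
  | .bot, _, _ => False
  | .neg φ, π, i => ¬ Sat M AT ET φ π i
  | .and φ ψ, π, i => Sat M AT ET φ π i ∧ Sat M AT ET ψ π i
  | .next φ, π, i => Sat M AT ET φ π (i + 1)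
  | .yest φ, π, i => 0 < i ∧ Sat M AT ET φ π (i - 1)
  | .strg φ, _, i => ∀ π' ∈ AT, Sat M AT ET φ π' i
  | .weak φ, _, i => ∀ π' ∈ ET, Sat M AT ET φ π' i

/-- Truth at a contextualized pointed model `(M, C, π, i)`. -/
def CSat {AP : Type} (M : TreeModel AP) (C : Context M) (φ : Formula AP)
    (π : Timeline M) (i : ℕ) : Prop :=
  Sat M (AccSet C) (ExpSet C) φ π i

/-- Closed formulas: `χ ::= [S]φ | [W]φ | ¬χ | (χ ∧ χ)`. -/
inductive Closed {AP : Type} : Formula AP → Prop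
  | strg (φ : Formula AP) : Closed (.strg φ)
  | weak (φ : Formula AP) : Closed (.weak φ)
  | neg {χ : Formula AP} : Closed χ → Closed (.neg χ)
  | and {χ₁ χ₂ : Formula AP} : Closed χ₁ → Closed χ₂ → Closed (.and χ₁ χ₂)


lemma maxOf_emptyset {α : Type u} (r : α → α → Prop) : maxOf r (∅ : Set α) = ∅ := by
  ext x; simp [maxOf]

lemma remSet_stays_empty {α : Type u} (r : α → α → Prop) (L : Set α) (k : ℕ)
    (h : remSet r L k = ∅) : ∀ j, remSet r L (k + j) = ∅ := by
  intro j
  induction j with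
  | zero => exact h
  | succ n ih =>
      show remSet r L ((k + n) + 1) = ∅
      rw [remSet, ih, maxOf_emptyset]
      simp

lemma levelSet_empty_of {α : Type u} (r : α → α → Prop) (L : Set α) {k j : ℕ}
    (h : remSet r L k = ∅) (hkj : k ≤ j) : levelSet r L j = ∅ := by
  obtain ⟨m, rfl⟩ := Nat.exists_eq_add_of_le hkj
  rw [levelSet, remSet_stays_empty r L k h m, maxOf_emptyset]

lemma En_emptyset {AP : Type} {M : TreeModel AP} :
    En (∅ : Set (Set (Timeline M))) = Set.univ := by
  simp [En]

lemma ExpSet_eval {AP : Type} {M : TreeModel AP} (C : Context M)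
    (h0 : En (levelSet C.prio C.rules 0) ≠ ∅)
    (hns : ∀ j, ISeg C j ≠ ∅) :
    ExpSet C = ⋂ j, En (levelSet C.prio C.rules j) := by
  rw [ExpSet, if_neg h0]
  ext x
  simp only [Set.mem_iInter, Set.mem_setOf_eq]
  exact ⟨fun h j => h j (hns j), fun h j _ => h j⟩


/-- every pair `(AT, ET)` with `AT` nonempty and `ET ⊆ AT` arises
from some context: there is a context `C` with `Acc(C) = AT` and `Exp(C) = ET`. -/
theorem every_pair_from_context {AP : Type} (M : TreeModel AP)
    (AT ET : Set (Timeline M)) (hAT : AT.Nonempty) (hsub : ET ⊆ AT) :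
    ∃ C : Context M, AccSet C = AT ∧ ExpSet C = ET := by
  by_cases hET : ET = ∅
  · -- ET empty: rules {AT, ∅}, trivial priority, und = {AT}
    refine ⟨⟨{AT, ∅}, (Set.finite_singleton _).insert _,
      fun _ _ => False, fun a _ h => h, fun a _ b _ c _ h _ => h, {AT}, ?_⟩, ?_, ?_⟩
    · intro x hx
      rw [Set.mem_singleton_iff] at hx
      subst hx
      exact ⟨Or.inl rfl, fun y _ h => h⟩
    · simp [AccSet, En]
    · have h0 : levelSet (fun _ _ => False) ({AT, ∅} : Set (Set (Timeline M))) 0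
          = {AT, ∅} := by
        ext x
        simp [levelSet, remSet, maxOf]
      have hEn0 : En (levelSet (fun _ _ => False)
          ({AT, ∅} : Set (Set (Timeline M))) 0) = ∅ := by
        rw [h0]; simp [En]
      rw [ExpSet, if_pos hEn0, hET]
  · by_cases hAE : AT = ET
    · -- AT = ET nonempty: single rule {AT}
      subst hAE
      refine ⟨⟨{AT}, Set.finite_singleton _,
        fun _ _ => False, fun a _ h => h, fun a _ b _ c _ h _ => h, {AT}, ?_⟩, ?_, ?_⟩
      · intro x hx
        rw [Set.mem_singleton_iff] at hx
        subst hx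
        exact ⟨rfl, fun y _ h => h⟩
      · simp [AccSet, En]
      · obtain ⟨x, hx⟩ := hAT
        have hl0 : levelSet (fun _ _ => False) ({AT} : Set (Set (Timeline M))) 0
            = {AT} := by
          ext y; simp [levelSet, remSet, maxOf]
        have hr1 : remSet (fun _ _ => False) ({AT} : Set (Set (Timeline M))) 1 = ∅ := by
          rw [remSet, remSet]
          ext y; simp [maxOf]
        have hlv : ∀ j, 1 ≤ j →
            levelSet (fun _ _ => False) ({AT} : Set (Set (Timeline M))) j = ∅ :=
          fun j hj => levelSet_empty_of _ _ hr1 hj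
        have hEn : ∀ j, x ∈ En (levelSet (fun _ _ => False)
            ({AT} : Set (Set (Timeline M))) j) := by
          intro j
          match j with
          | 0 => rw [hl0]; simpa [En] using hx
          | (n+1) => rw [hlv (n+1) (Nat.succ_le_succ (Nat.zero_le n)), En_emptyset]; trivial
        rw [ExpSet_eval]
        · show (⋂ j, En (levelSet (fun _ _ => False)
              ({AT} : Set (Set (Timeline M))) j)) = AT
          ext y
          simp only [Set.mem_iInter]
          constructor
          · intro h
            have := h 0
            rw [hl0] at this
            simpa [En] using this
          · intro hy j
            match j with
            | 0 => rw [hl0]; simpa [En] using hy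
            | (n+1) => rw [hlv (n+1) (Nat.succ_le_succ (Nat.zero_le n)), En_emptyset]; trivial
        · show En (levelSet (fun _ _ => False)
              ({AT} : Set (Set (Timeline M))) 0) ≠ ∅
          rw [hl0]
          simp only [En, Set.sInter_singleton]
          exact Set.nonempty_iff_ne_empty.mp ⟨x, hx⟩
        · intro j
          apply Set.nonempty_iff_ne_empty.mp
          exact ⟨x, by simp only [ISeg, Set.mem_iInter]; intro i _; exact hEn i⟩
    · -- AT ≠ ET, ET nonempty: rules {AT, ET}, AT ≻ ET
      obtain ⟨e, he⟩ := Set.nonempty_iff_ne_empty.mpr hET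
      refine ⟨⟨{AT, ET}, (Set.finite_singleton _).insert _,
        fun a b => a = AT ∧ b = ET,
        fun a _ h => hAE (h.1.symm.trans h.2),
        fun a _ b _ c _ h h' => absurd (h'.1.symm.trans h.2) hAE,
        {AT}, ?_⟩, ?_, ?_⟩
      · intro x hx
        rw [Set.mem_singleton_iff] at hx
        subst hx
        exact ⟨Or.inl rfl, fun y _ h => hAE h.2⟩
      · simp [AccSet, En]
      · set r : Set (Timeline M) → Set (Timeline M) → Prop :=
          fun a b => a = AT ∧ b = ET with hrdef
        have hmax : maxOf r ({AT, ET} : Set (Set (Timeline M))) = {AT} := by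
          ext x
          constructor
          · rintro ⟨hx, hm⟩
            rcases hx with rfl | rfl
            · rfl
            · exact absurd ⟨rfl, rfl⟩ (hm AT (Or.inl rfl))
          · rintro rfl
            exact ⟨Or.inl rfl, fun y _ h => hAE h.2⟩
        have hl0 : levelSet r ({AT, ET} : Set (Set (Timeline M))) 0 = {AT} := hmax
        have hr1 : remSet r ({AT, ET} : Set (Set (Timeline M))) 1 = {ET} := by
          show ({AT, ET} : Set (Set (Timeline M))) \ maxOf r {AT, ET} = {ET}
          rw [hmax]
          ext x
          constructor
          · rintro ⟨hx, hn⟩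
            rcases hx with rfl | rfl
            · exact absurd rfl hn
            · rfl
          · rintro rfl
            exact ⟨Or.inr rfl, fun h => hAE h.symm⟩
        have hmax1 : maxOf r ({ET} : Set (Set (Timeline M))) = {ET} := by
          ext x
          constructor
          · rintro ⟨hx, _⟩; exact hx
          · rintro rfl
            refine ⟨rfl, ?_⟩
            intro y hy h
            rw [Set.mem_singleton_iff] at hy
            exact hAE (h.1.symm.trans hy)
        have hl1 : levelSet r ({AT, ET} : Set (Set (Timeline M))) 1 = {ET} := by
          rw [levelSet, hr1, hmax1]
        have hr2 : remSet r ({AT, ET} : Set (Set (Timeline M))) 2 = ∅ := by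
          show remSet r ({AT, ET} : Set (Set (Timeline M))) 1
            \ maxOf r (remSet r ({AT, ET} : Set (Set (Timeline M))) 1) = ∅
          rw [hr1, hmax1]
          simp
        have hlv : ∀ j, 2 ≤ j →
            levelSet r ({AT, ET} : Set (Set (Timeline M))) j = ∅ :=
          fun j hj => levelSet_empty_of _ _ hr2 hj
        have hEn : ∀ j, ∀ x ∈ ET, x ∈ En (levelSet r
            ({AT, ET} : Set (Set (Timeline M))) j) := by
          intro j x hx
          match j with
          | 0 => rw [hl0]; simpa [En] using hsub hx
          | 1 => rw [hl1]; simpa [En] using hx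
          | (n+2) => rw [hlv (n+2) (by omega), En_emptyset]; trivial
        rw [ExpSet_eval]
        · show (⋂ j, En (levelSet r ({AT, ET} : Set (Set (Timeline M))) j)) = ET
          ext y
          simp only [Set.mem_iInter]
          constructor
          · intro h
            have := h 1
            rw [hl1] at this
            simpa [En] using this
          · intro hy j
            exact hEn j y hy
        · show En (levelSet r ({AT, ET} : Set (Set (Timeline M))) 0) ≠ ∅
          rw [hl0]
          simp only [En, Set.sInter_singleton]
          exact Set.nonempty_iff_ne_empty.mp ⟨e, hsub he⟩
        · intro j
          apply Set.nonempty_iff_ne_empty.mp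
          exact ⟨e, by simp only [ISeg, Set.mem_iInter]; intro i _; exact hEn i e he⟩
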